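/- (Matrix-Forest theorem for sums of rank-one operators) Let V be an n-dimensional complex inner product space, let r₁,…,r_N ∈ V, let ω₁,…,ω_N ∈ ℂ, and define L ∈ End(V) by L(v) := Σ_{i=1}^{N} ωᵢ·⟨v, rᵢ⟩·rᵢ. Then, as polynomials in x: det(x·id_V + L) = Σ_{k=0}^{n} x^{n−k} · Σ_{1 ≤ i₁ < i₂ < ⋯ < i_k ≤ N} ω_{i₁}ω_{i₂}⋯ω_{i_k} · det(⟨r_{i_s}, r_{i_t}⟩)_{s,t=1}^{k}. (The Gram determinant det(⟨r_{i_s}, r_{i_t}⟩) vanishes when {r_{i₁},…,r_{i_k}} is linearly dependent, so the inner sum may equivalently be taken over linearly independent k-element subsets.) -/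

import Mathlib

open scoped BigOperators

noncomputable section

open Matrix Finset

section Aux
variable {ι R : Type*} [Fintype ι] [DecidableEq ι] [CommRing R]

lemma mf_det_piecewise_one (B : Matrix ι ι R) (s : Finset ι) :
    Matrix.det (Matrix.of (s.piecewise (B : ι → ι → R) (1 : Matrix ι ι R))) =
      Matrix.det (B.submatrix (Subtype.val : {a // a ∈ s} → ι) (Subtype.val : {a // a ∈ s} → ι)) := by
  rw [Matrix.twoBlockTriangular_det _ (· ∈ s) ?_]
  · have h1 : (Matrix.toSquareBlockProp (Matrix.of (s.piecewise (B : ι → ι → R) (1 : Matrix ι ι R))) (· ∈ s)) = B.submatrix (Subtype.val : {a // a ∈ s} → ι) Subtype.val := by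
      ext i j
      simp [Matrix.toSquareBlockProp, Finset.piecewise, i.2]
    have h2 : (Matrix.toSquareBlockProp (Matrix.of (s.piecewise (B : ι → ι → R) (1 : Matrix ι ι R))) (fun i => ¬ i ∈ s)) = 1 := by
      ext i j
      show s.piecewise (B : ι → ι → R) (1 : Matrix ι ι R) i j = _
      erw [Finset.piecewise_eq_of_notMem _ _ _ i.2]; rw [Matrix.one_apply, Matrix.one_apply]
      simp [Subtype.ext_iff]
    rw [h1, h2, Matrix.det_one, mul_one]
    convert rfl
  · intro i hi j hj
    have hij : i ≠ j := fun h => hi (h ▸ hj)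
    simp [Finset.piecewise, hi, Matrix.one_apply, hij]

lemma mf_det_one_add_expand (B : Matrix ι ι R) :
    Matrix.det (1 + B) = ∑ s : Finset ι,
      Matrix.det (B.submatrix (Subtype.val : {a // a ∈ s} → ι) (Subtype.val : {a // a ∈ s} → ι)) := by
  have h := (Matrix.detRowAlternating (R := R) (n := ι)).toMultilinearMap.map_add_univ (B : ι → ι → R) (1 : Matrix ι ι R)
  have e1 : Matrix.det (1 + B) = (Matrix.detRowAlternating (R := R) (n := ι)).toMultilinearMap ((B : ι → ι → R) + (1 : Matrix ι ι R)) := by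
    rw [add_comm]; rfl
  rw [e1]; refine h.trans ?_
  exact Finset.sum_congr rfl fun s _ => mf_det_piecewise_one B s

end Aux

lemma mf_gram_det_zero (n N : ℕ) (C : Matrix (Fin n) (Fin N) ℂ) (s : Finset (Fin N))
    (hs : n < s.card) :
    ((Cᴴ * C).submatrix (Subtype.val : {a // a ∈ s} → Fin N) (Subtype.val : {a // a ∈ s} → Fin N)).det = 0 := by
  have hfact : (Cᴴ * C).submatrix (Subtype.val : {a // a ∈ s} → Fin N) (Subtype.val : {a // a ∈ s} → Fin N)
      = (Cᴴ.submatrix (Subtype.val : {a // a ∈ s} → Fin N) id) * (C.submatrix id (Subtype.val : {a // a ∈ s} → Fin N)) := by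
    ext a b; simp [Matrix.mul_apply]
  by_contra h
  have hu : IsUnit ((Cᴴ * C).submatrix (Subtype.val : {a // a ∈ s} → Fin N) (Subtype.val : {a // a ∈ s} → Fin N)) :=
    (Matrix.isUnit_iff_isUnit_det _).2 (isUnit_iff_ne_zero.2 h)
  have hr : Matrix.rank ((Cᴴ * C).submatrix (Subtype.val : {a // a ∈ s} → Fin N) (Subtype.val : {a // a ∈ s} → Fin N))
      = Fintype.card {a // a ∈ s} := Matrix.rank_of_isUnit (n := {a // a ∈ s}) _ hu
  have h1 : Matrix.rank ((Cᴴ * C).submatrix (Subtype.val : {a // a ∈ s} → Fin N) (Subtype.val : {a // a ∈ s} → Fin N)) ≤ n := by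
    rw [hfact]
    refine le_trans (Matrix.rank_mul_le_left _ _) ?_
    refine le_trans (Matrix.rank_le_card_width _) ?_
    simp
  rw [hr] at h1
  simp [Fintype.card_coe] at h1
  omega

lemma mf_regroup_sum (n N : ℕ) (x : ℂ) (hx : x ≠ 0) (w : Finset (Fin N) → ℂ)
    (hw : ∀ s : Finset (Fin N), n < s.card → w s = 0) :
    x ^ n * ∑ s : Finset (Fin N), (x⁻¹ ^ s.card * w s)
      = ∑ k ∈ Finset.range (n + 1), x ^ (n - k) *
          ∑ s ∈ Finset.univ.powersetCard k, w s := by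
  set c := (Finset.univ : Finset (Fin N)).card with hc
  have hW1 : ∀ k, n < k → ∑ s ∈ (Finset.univ : Finset (Fin N)).powersetCard k, w s = 0 := by
    intro k hk
    refine Finset.sum_eq_zero fun s hs => hw s ?_
    rw [(Finset.mem_powersetCard.1 hs).2]; exact hk
  have hW2 : ∀ k, c < k → ∑ s ∈ (Finset.univ : Finset (Fin N)).powersetCard k, w s = 0 := by
    intro k hk
    simp only [Finset.powersetCard_eq_empty.2 hk, Finset.sum_empty]
  have step0 : x ^ n * ∑ s : Finset (Fin N), (x⁻¹ ^ s.card * w s)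
      = ∑ k ∈ Finset.range (c + 1), (if k ≤ n then x ^ (n - k) * ∑ s ∈ (Finset.univ : Finset (Fin N)).powersetCard k, w s else 0) := by
    rw [← Finset.powerset_univ, Finset.powerset_card_disjiUnion]
    erw [Finset.sum_disjiUnion]
    rw [Finset.mul_sum]
    refine Finset.sum_congr rfl fun k _ => ?_
    by_cases hk : k ≤ n
    · rw [if_pos hk, Finset.mul_sum, Finset.mul_sum]
      refine Finset.sum_congr rfl fun s hs => ?_
      rw [(Finset.mem_powersetCard.1 hs).2, ← mul_assoc]
      congr 1
      simp [pow_sub₀ x hx hk, div_eq_mul_inv, inv_pow]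
    · rw [if_neg hk]
      have hz : ∑ s ∈ (Finset.univ : Finset (Fin N)).powersetCard k, x⁻¹ ^ s.card * w s = 0 :=
        Finset.sum_eq_zero fun s hs => by
          rw [hw s (by rw [(Finset.mem_powersetCard.1 hs).2]; omega), mul_zero]
      rw [hz, mul_zero]
  rw [step0]
  set U := Finset.range (max n c + 1) with hU
  rw [Finset.sum_subset (show Finset.range (c+1) ⊆ U by
        rw [hU]; exact Finset.range_subset_range.2 (by omega))
      (fun k _ hk => by
        have hkc : c < k := by simp only [Finset.mem_range] at hk ⊢; omega
        rw [hW2 k hkc, mul_zero, ite_self])]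
  have step2 : ∑ k ∈ U, (if k ≤ n then x ^ (n - k) * ∑ s ∈ (Finset.univ : Finset (Fin N)).powersetCard k, w s else 0)
      = ∑ k ∈ U, x ^ (n - k) * ∑ s ∈ (Finset.univ : Finset (Fin N)).powersetCard k, w s := by
    refine Finset.sum_congr rfl fun k _ => ?_
    by_cases hk : k ≤ n
    · rw [if_pos hk]
    · rw [if_neg hk, hW1 k (by omega), mul_zero]
  rw [step2]
  exact (Finset.sum_subset (show Finset.range (n+1) ⊆ U by
      rw [hU]; exact Finset.range_subset_range.2 (by omega))
    (fun k _ hk => by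
      have : n < k := by simp only [Finset.mem_range] at hk ⊢; omega
      rw [hW1 k this, mul_zero])).symm

lemma mf_matrix_main_ne (n N : ℕ) (C : Matrix (Fin n) (Fin N) ℂ) (ω : Fin N → ℂ) (x : ℂ)
    (hx : x ≠ 0) :
    (x • (1 : Matrix (Fin n) (Fin n) ℂ) + C * Matrix.diagonal ω * Cᴴ).det
      = ∑ k ∈ Finset.range (n + 1), x ^ (n - k) *
          ∑ s ∈ Finset.univ.powersetCard k, ((∏ i ∈ s, ω i) *
            ((Cᴴ * C).submatrix (Subtype.val : {a // a ∈ s} → Fin N) (Subtype.val : {a // a ∈ s} → Fin N)).det) := by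
  have e1 : x • (1 : Matrix (Fin n) (Fin n) ℂ) + C * Matrix.diagonal ω * Cᴴ
      = x • ((1 : Matrix (Fin n) (Fin n) ℂ) + ((x⁻¹ • C) * Matrix.diagonal ω) * Cᴴ) := by
    rw [smul_add]
    congr 1
    simp [Matrix.smul_mul, smul_smul, mul_inv_cancel₀ hx]
  rw [e1, Matrix.det_smul, Matrix.det_one_add_mul_comm]
  have e2 : (1 : Matrix (Fin N) (Fin N) ℂ) + Cᴴ * ((x⁻¹ • C) * Matrix.diagonal ω)
      = 1 + x⁻¹ • (Cᴴ * C * Matrix.diagonal ω) := by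
    simp [Matrix.mul_smul, Matrix.smul_mul, Matrix.mul_assoc]
  rw [e2, mf_det_one_add_expand]
  have e5 : ∀ s : Finset (Fin N),
      (((x⁻¹ • (Cᴴ * C * Matrix.diagonal ω))).submatrix (Subtype.val : {a // a ∈ s} → Fin N) (Subtype.val : {a // a ∈ s} → Fin N)).det
      = x⁻¹ ^ s.card * ((∏ i ∈ s, ω i) *
          ((Cᴴ * C).submatrix (Subtype.val : {a // a ∈ s} → Fin N) (Subtype.val : {a // a ∈ s} → Fin N)).det) := by
    intro s
    have e3 : ((x⁻¹ • (Cᴴ * C * Matrix.diagonal ω)).submatrix (Subtype.val : {a // a ∈ s} → Fin N) (Subtype.val : {a // a ∈ s} → Fin N))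
        = x⁻¹ • (((Cᴴ * C).submatrix (Subtype.val : {a // a ∈ s} → Fin N) (Subtype.val : {a // a ∈ s} → Fin N)) * Matrix.diagonal (fun a : {a // a ∈ s} => ω ↑a)) := by
      ext a b
      simp [Matrix.mul_diagonal]
    rw [e3, Matrix.det_smul, Matrix.det_mul, Matrix.det_diagonal]
    rw [Fintype.card_coe, Finset.prod_coe_sort]
    ring
  simp only [Matrix.det_one, mul_one, Fintype.card_fin]
  rw [Finset.sum_congr rfl fun s _ => e5 s]
  refine mf_regroup_sum n N x hx _ fun s hs => ?_
  rw [mf_gram_det_zero n N C s hs, mul_zero]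

lemma mf_matrix_main (n N : ℕ) (C : Matrix (Fin n) (Fin N) ℂ) (ω : Fin N → ℂ) (x : ℂ) :
    (x • (1 : Matrix (Fin n) (Fin n) ℂ) + C * Matrix.diagonal ω * Cᴴ).det
      = ∑ k ∈ Finset.range (n + 1), x ^ (n - k) *
          ∑ s ∈ Finset.univ.powersetCard k, ((∏ i ∈ s, ω i) *
            ((Cᴴ * C).submatrix (Subtype.val : {a // a ∈ s} → Fin N) (Subtype.val : {a // a ∈ s} → Fin N)).det) := by
  have h1 : Continuous fun y : ℂ =>
      (y • (1 : Matrix (Fin n) (Fin n) ℂ) + C * Matrix.diagonal ω * Cᴴ).det := by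
    apply Continuous.matrix_det
    exact (continuous_id.smul continuous_const).add continuous_const
  have h2 : Continuous fun y : ℂ => ∑ k ∈ Finset.range (n + 1), y ^ (n - k) *
          ∑ s ∈ Finset.univ.powersetCard k, ((∏ i ∈ s, ω i) *
            ((Cᴴ * C).submatrix (Subtype.val : {a // a ∈ s} → Fin N) (Subtype.val : {a // a ∈ s} → Fin N)).det) := by
    refine continuous_finset_sum _ fun k _ => ?_
    exact (continuous_pow _).mul continuous_const
  have key := Continuous.ext_on (dense_compl_singleton (0 : ℂ)) h1 h2 ?_
  · exact congrFun key x
  · intro y hy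
    exact mf_matrix_main_ne n N C ω y (by simpa using hy)


/-- abstract Matrix-Forest theorem for sums of rank-one
operators. For vectors `r₁,…,r_N` in an `n`-dimensional complex inner product
space and weights `ω₁,…,ω_N`, the characteristic polynomial of
`L(v) = ∑ᵢ ωᵢ ⟨v, rᵢ⟩ rᵢ` is computed by Gram determinants:
`det(x·id + L) = ∑_k x^{n-k} ∑_{i₁<⋯<i_k} ω_{i₁}⋯ω_{i_k} det(⟨r_{i_s}, r_{i_t}⟩)`.
Here `⟨·,·⟩` is linear in its first argument, i.e. `⟨v, r⟩ = inner r v` in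
Mathlib's convention. -/
theorem matrix_forest_rank_one
    {V : Type*} [NormedAddCommGroup V] [InnerProductSpace ℂ V]
    [FiniteDimensional ℂ V]
    (n : ℕ) (hn : Module.finrank ℂ V = n)
    (N : ℕ) (r : Fin N → V) (ω : Fin N → ℂ)
    (L : V →ₗ[ℂ] V)
    (hL : ∀ v : V, L v = ∑ i : Fin N, ω i • ((inner ℂ (r i) v : ℂ) • r i))
    (x : ℂ) :
    LinearMap.det (x • (LinearMap.id : V →ₗ[ℂ] V) + L)
      = ∑ k ∈ Finset.range (n + 1), x ^ (n - k) *
          ∑ s ∈ Finset.univ.powersetCard k,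
            (∏ i ∈ s, ω i) *
              Matrix.det (Matrix.of fun a b : ↥s => (inner ℂ (r (b : Fin N)) (r (a : Fin N)) : ℂ)) := by
  subst hn
  set e := stdOrthonormalBasis ℂ V with he
  set b := e.toBasis with hb
  set C : Matrix (Fin (Module.finrank ℂ V)) (Fin N) ℂ :=
    Matrix.of fun k i => (inner ℂ (e k) (r i) : ℂ) with hC
  rw [← LinearMap.det_toMatrix b]
  have hM : LinearMap.toMatrix b b (x • LinearMap.id + L)
      = x • 1 + C * Matrix.diagonal ω * Cᴴ := by
    rw [map_add, _root_.map_smul, LinearMap.toMatrix_id]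
    congr 1
    ext k j
    rw [LinearMap.toMatrix_apply, hL]
    simp only [hb, OrthonormalBasis.coe_toBasis_repr_apply, OrthonormalBasis.repr_apply_apply,
      OrthonormalBasis.coe_toBasis, inner_sum, inner_smul_right, Matrix.mul_apply,
      Matrix.mul_diagonal, Matrix.conjTranspose_apply, hC, Matrix.of_apply, RCLike.star_def,
      ← inner_conj_symm (r _) (e j)]
    refine Finset.sum_congr rfl fun i _ => ?_
    rw [Finset.sum_eq_single i (fun c _ hc => by rw [Matrix.diagonal_apply_ne ω hc, mul_zero])
      (by simp)]
    rw [Matrix.diagonal_apply_eq]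
    ring
  rw [hM, mf_matrix_main]
  refine Finset.sum_congr rfl fun k _ => ?_
  congr 1
  refine Finset.sum_congr rfl fun s _ => ?_
  congr 1
  have hg : Matrix.of (fun a b : ↥s => (inner ℂ (r (b : Fin N)) (r (a : Fin N)) : ℂ))
      = ((Cᴴ * C).submatrix (Subtype.val : {a // a ∈ s} → Fin N) (Subtype.val : {a // a ∈ s} → Fin N))ᵀ := by
    ext a c
    simp only [Matrix.of_apply, Matrix.transpose_apply, Matrix.submatrix_apply,
      Matrix.mul_apply, Matrix.conjTranspose_apply, hC, Matrix.of_apply, RCLike.star_def,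
      ← inner_conj_symm (r _) (e _)]
    rw [← OrthonormalBasis.sum_inner_mul_inner e (r (c : Fin N)) (r (a : Fin N))]
    refine Finset.sum_congr rfl fun i _ => ?_
    rw [inner_conj_symm]
  rw [hg, Matrix.det_transpose]

end
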